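/- Let c₁, c₂, c₃ be oriented circles whose discriminant D = Q(c₁ − c₂) · Q(c₁ − c₃) · Q(c₂ − c₃) is strictly negative. Then the oriented Apollonius problem for (c₁, c₂, c₃) has no solution. -/
import Mathlib


open RealInnerProductSpace

noncomputable section

/-- The Euclidean plane. -/
abbrev Pl := EuclideanSpace ℝ (Fin 2)

/-- The Lorentz quadratic form `Q(x, r) = ‖x‖² − r²` on the space of oriented circles. -/
def Q (c : Pl × ℝ) : ℝ := ‖c.1‖ ^ 2 - c.2 ^ 2

/-- Solutions of the oriented Apollonius problem for the oriented circles `c₁, c₂, c₃`: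
either an oriented circle `d` with `Q(d − cᵢ) = 0` for all `i`, or an oriented line
`(u, t)` (with `‖u‖ = 1`, representing `{p : ⟪u, p⟫ = t}`) tangent to every `cᵢ`,
i.e. `⟪u, xᵢ⟫ − t = rᵢ` for all `i`. The solution set is the disjoint union of the two. -/
def OrientedApolloniusSolutions (c₁ c₂ c₃ : Pl × ℝ) : Type :=
  {d : Pl × ℝ // Q (d - c₁) = 0 ∧ Q (d - c₂) = 0 ∧ Q (d - c₃) = 0} ⊕
  {l : Pl × ℝ // ‖l.1‖ = 1 ∧ ⟪l.1, c₁.1⟫ - l.2 = c₁.2 ∧ ⟪l.1, c₂.1⟫ - l.2 = c₂.2 ∧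
    ⟪l.1, c₃.1⟫ - l.2 = c₃.2}

/-- Algebraic core of the circle case. -/
lemma apollonius_key (p12 p13 p23 r1 r2 r3 : ℝ)
    (h12 : p12 ^ 2 + 2 * p12 * (r1 * r2) ≤ 0)
    (h13 : p13 ^ 2 + 2 * p13 * (r1 * r3) ≤ 0)
    (h23 : p23 ^ 2 + 2 * p23 * (r2 * r3) ≤ 0)
    (hP : 0 < p12 * p13 * p23) : False := by
  have a12 : p12 * (r1 * r2) ≤ 0 := by nlinarith [sq_nonneg p12]
  have a13 : p13 * (r1 * r3) ≤ 0 := by nlinarith [sq_nonneg p13]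
  have a23 : p23 * (r2 * r3) ≤ 0 := by nlinarith [sq_nonneg p23]
  have h1 : 0 ≤ (-(p12 * (r1 * r2))) * (-(p13 * (r1 * r3))) :=
    mul_nonneg (neg_nonneg.2 a12) (neg_nonneg.2 a13)
  have h2 : ((-(p12 * (r1 * r2))) * (-(p13 * (r1 * r3)))) * (p23 * (r2 * r3)) ≤ 0 :=
    mul_nonpos_of_nonneg_of_nonpos h1 a23
  have hprod : p12 * p13 * p23 * (r1 * r2 * r3) ^ 2 ≤ 0 := by nlinarith [h2]
  have hr0 : r1 * r2 * r3 = 0 := by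
    have hsq : (r1 * r2 * r3) ^ 2 ≤ 0 := by nlinarith [hprod, hP, sq_nonneg (r1 * r2 * r3)]
    nlinarith [sq_nonneg (r1 * r2 * r3)]
  rcases mul_eq_zero.mp hr0 with h | h3
  · rcases mul_eq_zero.mp h with h1' | h2'
    · subst h1'
      have : p12 = 0 := by nlinarith [sq_nonneg p12]
      rw [this] at hP; simp at hP
    · subst h2'
      have : p12 = 0 := by nlinarith [sq_nonneg p12]
      rw [this] at hP; simp at hP
  · subst h3
    have : p13 = 0 := by nlinarith [sq_nonneg p13]
    rw [this] at hP; simp at hP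


/-- Real-arithmetic wrapper for the circle case. -/
lemma apollonius_key' (I12 I13 I23 r1 r2 r3 : ℝ)
    (c12 : I12 * I12 ≤ r1 ^ 2 * r2 ^ 2)
    (c13 : I13 * I13 ≤ r1 ^ 2 * r3 ^ 2)
    (c23 : I23 * I23 ≤ r2 ^ 2 * r3 ^ 2)
    (hD : -2 * (I12 - r1 * r2) * (-2 * (I13 - r1 * r3)) * (-2 * (I23 - r2 * r3)) < 0) :
    False := by
  have b12 : (I12 - r1 * r2) ^ 2 + 2 * (I12 - r1 * r2) * (r1 * r2) ≤ 0 := by nlinarith [c12]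
  have b13 : (I13 - r1 * r3) ^ 2 + 2 * (I13 - r1 * r3) * (r1 * r3) ≤ 0 := by nlinarith [c13]
  have b23 : (I23 - r2 * r3) ^ 2 + 2 * (I23 - r2 * r3) * (r2 * r3) ≤ 0 := by nlinarith [c23]
  have hP : 0 < (I12 - r1 * r2) * (I13 - r1 * r3) * (I23 - r2 * r3) := by nlinarith [hD]
  exact apollonius_key _ _ _ r1 r2 r3 b12 b13 b23 hP

/-- If the discriminant `D = Q(c₁ − c₂) · Q(c₁ − c₃) · Q(c₂ − c₃)` is strictly negative,
the oriented Apollonius problem has no solution. -/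
theorem oriented_apollonius_no_solution (c₁ c₂ c₃ : Pl × ℝ)
    (hD : Q (c₁ - c₂) * Q (c₁ - c₃) * Q (c₂ - c₃) < 0) :
    IsEmpty (OrientedApolloniusSolutions c₁ c₂ c₃) := by
  constructor
  rintro (⟨d, h1, h2, h3⟩ | ⟨l, hu, h1, h2, h3⟩)
  · -- circle case
    set x1 := d.1 - c₁.1 with hx1
    set x2 := d.1 - c₂.1 with hx2
    set x3 := d.1 - c₃.1 with hx3
    set r1 := d.2 - c₁.2 with hr1
    set r2 := d.2 - c₂.2 with hr2
    set r3 := d.2 - c₃.2 with hr3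
    have e1 : ‖x1‖ ^ 2 = r1 ^ 2 := by
      have h := h1; simp only [Q, Prod.fst_sub, Prod.snd_sub] at h
      rw [← hx1, ← hr1] at h; linarith
    have e2 : ‖x2‖ ^ 2 = r2 ^ 2 := by
      have h := h2; simp only [Q, Prod.fst_sub, Prod.snd_sub] at h
      rw [← hx2, ← hr2] at h; linarith
    have e3 : ‖x3‖ ^ 2 = r3 ^ 2 := by
      have h := h3; simp only [Q, Prod.fst_sub, Prod.snd_sub] at h
      rw [← hx3, ← hr3] at h; linarith
    have key : ∀ (a b : Pl) (ra rb : ℝ), ‖a‖ ^ 2 = ra ^ 2 → ‖b‖ ^ 2 = rb ^ 2 →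
        ‖a - b‖ ^ 2 - (ra - rb) ^ 2 = -2 * (⟪a, b⟫ - ra * rb) := by
      intro a b ra rb ha hb
      rw [@norm_sub_sq_real]
      nlinarith [ha, hb]
    have d12 : Q (c₁ - c₂) = -2 * (⟪x1, x2⟫ - r1 * r2) := by
      have hfst : (c₁ - c₂).1 = x2 - x1 := by
        simp only [Prod.fst_sub, hx1, hx2]; abel
      have hsnd : (c₁ - c₂).2 = r2 - r1 := by
        simp only [Prod.snd_sub, hr1, hr2]; ring
      rw [Q, hfst, hsnd, key x2 x1 r2 r1 e2 e1, real_inner_comm]; ring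
    have d13 : Q (c₁ - c₃) = -2 * (⟪x1, x3⟫ - r1 * r3) := by
      have hfst : (c₁ - c₃).1 = x3 - x1 := by
        simp only [Prod.fst_sub, hx1, hx3]; abel
      have hsnd : (c₁ - c₃).2 = r3 - r1 := by
        simp only [Prod.snd_sub, hr1, hr3]; ring
      rw [Q, hfst, hsnd, key x3 x1 r3 r1 e3 e1, real_inner_comm]; ring
    have d23 : Q (c₂ - c₃) = -2 * (⟪x2, x3⟫ - r2 * r3) := by
      have hfst : (c₂ - c₃).1 = x3 - x2 := by
        simp only [Prod.fst_sub, hx2, hx3]; abel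
      have hsnd : (c₂ - c₃).2 = r3 - r2 := by
        simp only [Prod.snd_sub, hr2, hr3]; ring
      rw [Q, hfst, hsnd, key x3 x2 r3 r2 e3 e2, real_inner_comm]; ring
    have cs : ∀ (a b : Pl) (ra rb : ℝ), ‖a‖ ^ 2 = ra ^ 2 → ‖b‖ ^ 2 = rb ^ 2 →
        ⟪a, b⟫ * ⟪a, b⟫ ≤ ra ^ 2 * rb ^ 2 := by
      intro a b ra rb ha hb
      have h := real_inner_mul_inner_self_le a b
      rw [real_inner_self_eq_norm_sq, real_inner_self_eq_norm_sq, ha, hb] at h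
      exact h
    rw [d12, d13, d23] at hD
    exact apollonius_key' _ _ _ r1 r2 r3 (cs x1 x2 r1 r2 e1 e2) (cs x1 x3 r1 r3 e1 e3)
      (cs x2 x3 r2 r3 e2 e3) hD
  · -- line case: each factor is nonnegative
    have key : ∀ (a b : Pl × ℝ), ⟪l.1, a.1⟫ - l.2 = a.2 → ⟪l.1, b.1⟫ - l.2 = b.2 →
        0 ≤ Q (a - b) := by
      intro a b ha hb
      have hr : a.2 - b.2 = ⟪l.1, a.1 - b.1⟫ := by
        rw [inner_sub_right]; linarith
      have cs := real_inner_mul_inner_self_le l.1 (a.1 - b.1)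
      rw [real_inner_self_eq_norm_sq, real_inner_self_eq_norm_sq, hu] at cs
      simp only [Q, Prod.fst_sub, Prod.snd_sub]
      rw [hr]
      nlinarith [cs]
    have q12 := key c₁ c₂ h1 h2
    have q13 := key c₁ c₃ h1 h3
    have q23 := key c₂ c₃ h2 h3
    have := mul_nonneg (mul_nonneg q12 q13) q23
    linarith
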